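/- arXiv:2101.09082 — 6 statements merged into one kernel-verified Lean document; each statement's English description precedes it below -/
import Mathlib

section
/- Let Φ ∈ ℂ^{M×N} and let δ ≥ 0 be a restricted isometry constant of order t for Φ. If U, V ∈ ℂ^{N×L} satisfy |supp(U) ∪ supp(V)| ≤ t, then |tr(U* (I − Φ*Φ) V)| ≤ δ · ‖U‖_F · ‖V‖_F. -/
open Matrix BigOperators

/-- Frobenius norm of a complex matrix. -/
noncomputable def frobNorm {m n : Type*} [Fintype m] [Fintype n] (A : Matrix m n ℂ) : ℝ :=
  Real.sqrt (∑ i, ∑ j, ‖A i j‖ ^ 2)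

open scoped Classical in
/-- The row support of a matrix: indices of its nonzero rows. -/
noncomputable def rowSupp {N L : ℕ} (X : Matrix (Fin N) (Fin L) ℂ) : Finset (Fin N) :=
  Finset.univ.filter (fun i => X i ≠ 0)

/-- `X_(T)`: the matrix obtained from `X` by zeroing every row with index outside `T`. -/
def rowRestrict {N L : ℕ} (T : Finset (Fin N)) (X : Matrix (Fin N) (Fin L) ℂ) :
    Matrix (Fin N) (Fin L) ℂ :=
  fun i j => if i ∈ T then X i j else 0

/-- Euclidean norm of a complex vector. -/
noncomputable def vecNorm {ι : Type*} [Fintype ι] (v : ι → ℂ) : ℝ :=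
  Real.sqrt (∑ i, ‖v i‖ ^ 2)

/-- `Φ_T`: the submatrix of columns of `Φ` indexed by `T`. -/
def colSub {M N : ℕ} (Φ : Matrix (Fin M) (Fin N) ℂ) (T : Finset (Fin N)) :
    Matrix (Fin M) {x // x ∈ T} ℂ :=
  fun i j => Φ i j.val

/-- `X_{(T)}`: the submatrix of rows of `X` indexed by `T`. -/
def rowSub {N L : ℕ} (T : Finset (Fin N)) (X : Matrix (Fin N) (Fin L) ℂ) :
    Matrix {x // x ∈ T} (Fin L) ℂ :=
  fun i j => X i.val j

/-- The set of values `‖R v‖` over unit vectors `v` (the "singular value range"). -/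
noncomputable def sigmaSet {L : ℕ} (R : Matrix (Fin L) (Fin L) ℂ) : Set ℝ :=
  {c | ∃ v : Fin L → ℂ, vecNorm v = 1 ∧ c = vecNorm (R.mulVec v)}

/-- The largest singular value of `R`. -/
noncomputable def sigmaMax {L : ℕ} (R : Matrix (Fin L) (Fin L) ℂ) : ℝ :=
  sSup (sigmaSet R)

/-- The smallest singular value of `R` (for invertible `R`). -/
noncomputable def sigmaMin {L : ℕ} (R : Matrix (Fin L) (Fin L) ℂ) : ℝ :=
  sInf (sigmaSet R)

/-- Spectral (operator) norm of a square complex matrix. -/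
noncomputable def specNorm {ι : Type*} [Fintype ι] (A : Matrix ι ι ℂ) : ℝ :=
  sSup {c | ∃ v : ι → ℂ, vecNorm v = 1 ∧ c = vecNorm (A.mulVec v)}

/-- `δ` is a restricted isometry constant (RIC) of order `t` for `A`, relative to matrices with
`L` columns: `(1-δ)‖Z‖_F² ≤ ‖AZ‖_F² ≤ (1+δ)‖Z‖_F²` for every `t` row-sparse `Z`. -/
def IsRIC {M N : ℕ} (L : ℕ) (A : Matrix (Fin M) (Fin N) ℂ) (t : ℕ) (δ : ℝ) : Prop :=
  ∀ Z : Matrix (Fin N) (Fin L) ℂ, (rowSupp Z).card ≤ t →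
    (1 - δ) * frobNorm Z ^ 2 ≤ frobNorm (A * Z) ^ 2 ∧
      frobNorm (A * Z) ^ 2 ≤ (1 + δ) * frobNorm Z ^ 2

/-- `γ` is a preconditioned restricted isometry constant (P-RIC) of order `t` for `Φ`:
`(1-γ)‖Z‖_F² ≤ Re tr((ΦZ)* (ΦΦ*)⁻¹ (ΦZ))` for every `t` row-sparse `Z`. -/
def IsPRIC {M N : ℕ} (L : ℕ) (Φ : Matrix (Fin M) (Fin N) ℂ) (t : ℕ) (γ : ℝ) : Prop :=
  ∀ Z : Matrix (Fin N) (Fin L) ℂ, (rowSupp Z).card ≤ t →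
    (1 - γ) * frobNorm Z ^ 2 ≤ (Matrix.trace ((Φ * Z)ᴴ * ((Φ * Φᴴ)⁻¹ * (Φ * Z)))).re

/-- `θ` is an upper restricted isometry constant of order `t` for `A`:
`‖AZ‖_F² ≤ (1+θ)‖Z‖_F²` for every `t` row-sparse `Z`. -/
def IsUpperRIC {M N : ℕ} (L : ℕ) (A : Matrix (Fin M) (Fin N) ℂ) (t : ℕ) (θ : ℝ) : Prop :=
  ∀ Z : Matrix (Fin N) (Fin L) ℂ, (rowSupp Z).card ≤ t →
    frobNorm (A * Z) ^ 2 ≤ (1 + θ) * frobNorm Z ^ 2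

/-- The least-squares feedback of `X` on the index set `T`:
rows outside `T` are zero and on `T` it equals
`X_{(T)} + (Φ_T* Φ_T)⁻¹ Φ_T* Φ_{T^c} X_{(T^c)}`. -/
noncomputable def feedback {M N L : ℕ} (Φ : Matrix (Fin M) (Fin N) ℂ) (T : Finset (Fin N))
    (X : Matrix (Fin N) (Fin L) ℂ) : Matrix (Fin N) (Fin L) ℂ :=
  fun i j =>
    if h : i ∈ T then
      (rowSub T X +
        ((colSub Φ T)ᴴ * colSub Φ T)⁻¹ * (colSub Φ T)ᴴ *
          (colSub Φ Tᶜ * rowSub Tᶜ X)) ⟨i, h⟩ j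
    else 0


section Aux

lemma frob_nonneg {m n : Type*} [Fintype m] [Fintype n] (A : Matrix m n ℂ) :
    0 ≤ frobNorm A := Real.sqrt_nonneg _

lemma frob_sq {m n : Type*} [Fintype m] [Fintype n] (A : Matrix m n ℂ) :
    frobNorm A ^ 2 = ∑ i, ∑ j, ‖A i j‖ ^ 2 := by
  apply Real.sq_sqrt
  positivity

lemma trace_herm {N L : ℕ} (Z : Matrix (Fin N) (Fin L) ℂ) :
    Matrix.trace (Zᴴ * Z) = ((frobNorm Z ^ 2 : ℝ) : ℂ) := by
  rw [frob_sq]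
  push_cast
  rw [Finset.sum_comm]
  simp only [Matrix.trace, Matrix.diag, Matrix.mul_apply, Matrix.conjTranspose_apply]
  congr 1; funext j; congr 1; funext i
  simp [Complex.star_def, mul_comm, Complex.mul_conj', Complex.mul_conj,
    Complex.normSq_eq_norm_sq, Complex.sq_norm]

lemma frob_smul {m n : Type*} [Fintype m] [Fintype n] (a : ℂ) (A : Matrix m n ℂ) :
    frobNorm (a • A) = ‖a‖ * frobNorm A := by
  unfold frobNorm
  have : ∑ i, ∑ j, ‖(a • A) i j‖ ^ 2 = ‖a‖ ^ 2 * ∑ i, ∑ j, ‖A i j‖ ^ 2 := by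
    simp [Finset.mul_sum, norm_mul, mul_pow, Matrix.smul_apply]
  rw [this, Real.sqrt_mul (by positivity), Real.sqrt_sq (norm_nonneg a)]

lemma frob_eq_zero {m n : Type*} [Fintype m] [Fintype n] {A : Matrix m n ℂ}
    (h : frobNorm A = 0) : A = 0 := by
  have hs : ∑ i, ∑ j, ‖A i j‖ ^ 2 = 0 := by
    have := frob_sq A
    rw [h] at this
    simpa using this.symm
  ext i j
  have h1 : ∀ i ∈ Finset.univ, (∑ j, ‖A i j‖ ^ 2 : ℝ) = 0 :=
    (Finset.sum_eq_zero_iff_of_nonneg (fun i _ => by positivity)).mp hs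
  have h2 : ∀ j ∈ Finset.univ, (‖A i j‖ ^ 2 : ℝ) = 0 :=
    (Finset.sum_eq_zero_iff_of_nonneg (fun j _ => by positivity)).mp (h1 i (Finset.mem_univ i))
  have := h2 j (Finset.mem_univ j)
  simpa [pow_eq_zero_iff] using this

lemma mem_rowSupp {N L : ℕ} {X : Matrix (Fin N) (Fin L) ℂ} {i : Fin N} :
    i ∈ rowSupp X ↔ X i ≠ 0 := by
  simp [rowSupp]

lemma rowSupp_add_sub {N L : ℕ} (U W : Matrix (Fin N) (Fin L) ℂ) :
    rowSupp (U + W) ⊆ rowSupp U ∪ rowSupp W := by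
  intro i hi
  rw [mem_rowSupp] at hi
  by_contra hc
  simp only [Finset.mem_union, mem_rowSupp, not_or, not_not] at hc
  apply hi
  funext j
  have h1 : U i j = 0 := by rw [hc.1]; rfl
  have h2 : W i j = 0 := by rw [hc.2]; rfl
  simp [Matrix.add_apply, h1, h2]

lemma rowSupp_sub_sub {N L : ℕ} (U W : Matrix (Fin N) (Fin L) ℂ) :
    rowSupp (U - W) ⊆ rowSupp U ∪ rowSupp W := by
  intro i hi
  rw [mem_rowSupp] at hi
  by_contra hc
  simp only [Finset.mem_union, mem_rowSupp, not_or, not_not] at hc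
  apply hi
  funext j
  have h1 : U i j = 0 := by rw [hc.1]; rfl
  have h2 : W i j = 0 := by rw [hc.2]; rfl
  simp [Matrix.sub_apply, h1, h2]

lemma rowSupp_smul_sub {N L : ℕ} (a : ℂ) (U : Matrix (Fin N) (Fin L) ℂ) :
    rowSupp (a • U) ⊆ rowSupp U := by
  intro i hi
  rw [mem_rowSupp] at hi ⊢
  intro h
  apply hi
  funext j
  have : U i j = 0 := by rw [h]; rfl
  simp [Matrix.smul_apply, this]

/-- Core estimate for the real part of the bilinear form. -/
lemma key_re {M N L t : ℕ} (Φ : Matrix (Fin M) (Fin N) ℂ) (δ : ℝ)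
    (hRIC : IsRIC L Φ t δ) (U W : Matrix (Fin N) (Fin L) ℂ)
    (hsupp : (rowSupp U ∪ rowSupp W).card ≤ t) :
    (Matrix.trace (Uᴴ * ((1 - Φᴴ * Φ) * W))).re ≤
      δ / 2 * (frobNorm U ^ 2 + frobNorm W ^ 2) := by
  set a := Matrix.trace (Uᴴ * W) with ha
  set b := Matrix.trace ((Φ * U)ᴴ * (Φ * W)) with hb
  have hstarA : Matrix.trace (Wᴴ * U) = star a := by
    rw [ha, ← Matrix.trace_conjTranspose]
    congr 1
    simp [Matrix.conjTranspose_mul]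
  have hstarB : Matrix.trace ((Φ * W)ᴴ * (Φ * U)) = star b := by
    rw [hb, ← Matrix.trace_conjTranspose]
    congr 1
    simp [Matrix.conjTranspose_mul, Matrix.mul_assoc]
  have hT : Matrix.trace (Uᴴ * ((1 - Φᴴ * Φ) * W)) = a - b := by
    have h1 : (1 - Φᴴ * Φ) * W = W - Φᴴ * (Φ * W) := by
      rw [Matrix.sub_mul, Matrix.one_mul, Matrix.mul_assoc]
    have h2 : (Φ * U)ᴴ * (Φ * W) = Uᴴ * (Φᴴ * (Φ * W)) := by
      rw [Matrix.conjTranspose_mul, Matrix.mul_assoc]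
    rw [h1, Matrix.mul_sub, Matrix.trace_sub, ha, hb, h2]
  -- expansions
  have e1c : ((frobNorm (U + W) ^ 2 : ℝ) : ℂ)
      = ((frobNorm U ^ 2 : ℝ) : ℂ) + ((frobNorm W ^ 2 : ℝ) : ℂ) + (a + star a) := by
    rw [← trace_herm, ← trace_herm, ← trace_herm]
    rw [Matrix.conjTranspose_add, Matrix.add_mul, Matrix.mul_add, Matrix.mul_add,
      Matrix.trace_add, Matrix.trace_add, Matrix.trace_add, hstarA]
    ring
  have e2c : ((frobNorm (U - W) ^ 2 : ℝ) : ℂ)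
      = ((frobNorm U ^ 2 : ℝ) : ℂ) + ((frobNorm W ^ 2 : ℝ) : ℂ) - (a + star a) := by
    rw [← trace_herm, ← trace_herm, ← trace_herm]
    rw [Matrix.conjTranspose_sub, Matrix.sub_mul, Matrix.mul_sub, Matrix.mul_sub,
      Matrix.trace_sub, Matrix.trace_sub, Matrix.trace_sub, hstarA]
    ring
  have e3c : ((frobNorm (Φ * (U + W)) ^ 2 : ℝ) : ℂ)
      = ((frobNorm (Φ * U) ^ 2 : ℝ) : ℂ) + ((frobNorm (Φ * W) ^ 2 : ℝ) : ℂ) + (b + star b) := by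
    rw [← trace_herm, ← trace_herm, ← trace_herm]
    rw [Matrix.mul_add, Matrix.conjTranspose_add, Matrix.add_mul, Matrix.mul_add, Matrix.mul_add,
      Matrix.trace_add, Matrix.trace_add, Matrix.trace_add, hstarB]
    ring
  have e4c : ((frobNorm (Φ * (U - W)) ^ 2 : ℝ) : ℂ)
      = ((frobNorm (Φ * U) ^ 2 : ℝ) : ℂ) + ((frobNorm (Φ * W) ^ 2 : ℝ) : ℂ) - (b + star b) := by
    rw [← trace_herm, ← trace_herm, ← trace_herm]
    rw [Matrix.mul_sub, Matrix.conjTranspose_sub, Matrix.sub_mul, Matrix.mul_sub, Matrix.mul_sub,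
      Matrix.trace_sub, Matrix.trace_sub, Matrix.trace_sub, hstarB]
    ring
  -- real parts
  have e1 : frobNorm (U + W) ^ 2 = frobNorm U ^ 2 + frobNorm W ^ 2 + 2 * a.re := by
    have h := e1c
    rw [Complex.star_def, Complex.add_conj] at h
    exact_mod_cast h
  have e2 : frobNorm (U - W) ^ 2 = frobNorm U ^ 2 + frobNorm W ^ 2 - 2 * a.re := by
    have h := e2c
    rw [Complex.star_def, Complex.add_conj] at h
    exact_mod_cast h
  have e3 : frobNorm (Φ * (U + W)) ^ 2
      = frobNorm (Φ * U) ^ 2 + frobNorm (Φ * W) ^ 2 + 2 * b.re := by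
    have h := e3c
    rw [Complex.star_def, Complex.add_conj] at h
    exact_mod_cast h
  have e4 : frobNorm (Φ * (U - W)) ^ 2
      = frobNorm (Φ * U) ^ 2 + frobNorm (Φ * W) ^ 2 - 2 * b.re := by
    have h := e4c
    rw [Complex.star_def, Complex.add_conj] at h
    exact_mod_cast h
  -- RIC applications
  have hcardp : (rowSupp (U + W)).card ≤ t :=
    le_trans (Finset.card_le_card (rowSupp_add_sub U W)) hsupp
  have hcardm : (rowSupp (U - W)).card ≤ t :=
    le_trans (Finset.card_le_card (rowSupp_sub_sub U W)) hsupp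
  have h5 := (hRIC (U + W) hcardp).1
  have h6 := (hRIC (U - W) hcardm).2
  have hTre : (Matrix.trace (Uᴴ * ((1 - Φᴴ * Φ) * W))).re = a.re - b.re := by
    rw [hT]; simp [Complex.sub_re]
  have hdS : δ * frobNorm (U + W) ^ 2 + δ * frobNorm (U - W) ^ 2
      = 2 * (δ * frobNorm U ^ 2) + 2 * (δ * frobNorm W ^ 2) := by
    rw [e1, e2]; ring
  rw [hTre]
  linarith [h5, h6, e1, e2, e3, e4, hdS]

end Aux

/-- RIP inner-product estimate (first part of Lemma 4 of the paper). -/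
theorem stmt0 {M N L t : ℕ} (Φ : Matrix (Fin M) (Fin N) ℂ) (δ : ℝ) (hδ : 0 ≤ δ)
    (hRIC : IsRIC L Φ t δ) (U V : Matrix (Fin N) (Fin L) ℂ)
    (hsupp : (rowSupp U ∪ rowSupp V).card ≤ t) :
    ‖Matrix.trace (Uᴴ * ((1 - Φᴴ * Φ) * V))‖ ≤ δ * frobNorm U * frobNorm V := by
  set T := Matrix.trace (Uᴴ * ((1 - Φᴴ * Φ) * V)) with hTdef
  by_cases hT0 : T = 0
  · rw [hT0]
    simp only [norm_zero]
    exact mul_nonneg (mul_nonneg hδ (frob_nonneg U)) (frob_nonneg V)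
  have hUne : frobNorm U ≠ 0 := by
    intro h
    apply hT0
    rw [hTdef, frob_eq_zero h]
    simp
  have hVne : frobNorm V ≠ 0 := by
    intro h
    apply hT0
    rw [hTdef, frob_eq_zero h]
    simp
  have hUpos : 0 < frobNorm U := lt_of_le_of_ne (frob_nonneg U) (Ne.symm hUne)
  have hVpos : 0 < frobNorm V := lt_of_le_of_ne (frob_nonneg V) (Ne.symm hVne)
  set r : ℝ := Real.sqrt (frobNorm V / frobNorm U) with hr
  have hrpos : 0 < r := Real.sqrt_pos.mpr (by positivity)
  have hr2 : r ^ 2 = frobNorm V / frobNorm U := Real.sq_sqrt (by positivity)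
  have hrC : ((r : ℂ)) ≠ 0 := by exact_mod_cast hrpos.ne'
  have hTnormpos : 0 < ‖T‖ := norm_pos_iff.mpr hT0
  have hTnC : ((‖T‖ : ℝ) : ℂ) ≠ 0 := by exact_mod_cast hTnormpos.ne'
  set c : ℂ := star T / ((‖T‖ : ℝ) : ℂ) with hc
  have hcT : c * T = ((‖T‖ : ℝ) : ℂ) := by
    rw [hc, div_mul_eq_mul_div, Complex.star_def, ← Complex.normSq_eq_conj_mul_self,
      div_eq_iff hTnC, Complex.normSq_eq_norm_sq]
    push_cast
    ring
  have hcnorm : ‖c‖ = 1 := by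
    rw [hc, norm_div, norm_star]
    simp only [Complex.norm_real, Real.norm_eq_abs, abs_of_nonneg (norm_nonneg T)]
    exact div_self hTnormpos.ne'
  set U' : Matrix (Fin N) (Fin L) ℂ := (r : ℂ) • U with hU'
  set W' : Matrix (Fin N) (Fin L) ℂ := (c * (r : ℂ)⁻¹) • V with hW'
  have hsupp' : (rowSupp U' ∪ rowSupp W').card ≤ t :=
    le_trans (Finset.card_le_card
      (Finset.union_subset_union (rowSupp_smul_sub _ _) (rowSupp_smul_sub _ _))) hsupp
  have hkey := key_re Φ δ hRIC U' W' hsupp'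
  have htr : Matrix.trace (U'ᴴ * ((1 - Φᴴ * Φ) * W')) = ((‖T‖ : ℝ) : ℂ) := by
    rw [hU', hW', Matrix.conjTranspose_smul, Matrix.mul_smul, Matrix.smul_mul,
      Matrix.mul_smul, Matrix.trace_smul, Matrix.trace_smul, ← hTdef]
    simp only [smul_eq_mul, Complex.star_def, Complex.conj_ofReal]
    rw [← hcT]
    field_simp
  have hfU' : frobNorm U' = r * frobNorm U := by
    rw [hU', frob_smul]
    simp [abs_of_pos hrpos]
  have hfW' : frobNorm W' = r⁻¹ * frobNorm V := by
    rw [hW', frob_smul, norm_mul, hcnorm]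
    simp [abs_of_pos hrpos]
  rw [htr] at hkey
  simp only [Complex.ofReal_re] at hkey
  have habs : ‖T‖ = ‖T‖ := rfl
  rw [habs]
  have hrhs : δ / 2 * (frobNorm U' ^ 2 + frobNorm W' ^ 2) = δ * frobNorm U * frobNorm V := by
    rw [hfU', hfW', mul_pow, mul_pow, hr2]
    rw [inv_pow, hr2]
    field_simp
    ring
  linarith [hkey, hrhs.symm.le, hrhs.le]
end

section
/- Let Φ ∈ ℂ^{M×N} with ΦΦ* invertible, and let γ ≥ 0 be a preconditioned restricted isometry constant of order t for Φ. If U, V ∈ ℂ^{N×L} satisfy |supp(U) ∪ supp(V)| ≤ t, then |tr(U* (I − Φ*(ΦΦ*)⁻¹Φ) V)| ≤ γ · ‖U‖_F · ‖V‖_F. -/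
open Matrix BigOperators

section AuxCS
variable {m n : Type*} [Fintype m] [Fintype n]

lemma frobNorm_nonneg (A : Matrix m n ℂ) : 0 ≤ frobNorm A := Real.sqrt_nonneg _

lemma frobNorm_sq (A : Matrix m n ℂ) : frobNorm A ^ 2 = ∑ i, ∑ j, ‖A i j‖ ^ 2 := by
  rw [frobNorm, Real.sq_sqrt]; positivity

lemma trace_conjTranspose_mul_self (A : Matrix m n ℂ) :
    Matrix.trace (Aᴴ * A) = ((frobNorm A ^ 2 : ℝ) : ℂ) := by
  rw [frobNorm_sq]
  push_cast
  rw [Finset.sum_comm]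
  simp only [Matrix.trace, Matrix.diag, Matrix.mul_apply, Matrix.conjTranspose_apply]
  congr 1; ext j; congr 1; ext i
  simp [Complex.star_def, Complex.conj_mul']

lemma trace_cs (A B : Matrix m n ℂ) :
    ‖Matrix.trace (Aᴴ * B)‖ ≤ frobNorm A * frobNorm B := by
  classical
  let a : EuclideanSpace ℂ (m × n) := WithLp.toLp 2 (fun p : m × n => A p.1 p.2)
  let b : EuclideanSpace ℂ (m × n) := WithLp.toLp 2 (fun p : m × n => B p.1 p.2)
  have h1 : Matrix.trace (Aᴴ * B) = inner ℂ a b := by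
    simp only [Matrix.trace, Matrix.diag, Matrix.mul_apply, Matrix.conjTranspose_apply,
      PiLp.inner_apply, RCLike.inner_apply, a, b, Fintype.sum_prod_type, PiLp.toLp_apply]
    rw [Finset.sum_comm]; simp only [mul_comm (B _ _)]; rfl
  have h2 : ‖a‖ = frobNorm A := by
    simp [EuclideanSpace.norm_eq, frobNorm, Fintype.sum_prod_type, a]
  have h3 : ‖b‖ = frobNorm B := by
    simp [EuclideanSpace.norm_eq, frobNorm, Fintype.sum_prod_type, b]
  rw [h1, ← h2, ← h3]
  exact norm_inner_le_norm a b

end AuxCS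

/-- preconditioned RIP inner-product estimate (first part of Remark 5). -/
theorem stmt2 {M N L t : ℕ} (Φ : Matrix (Fin M) (Fin N) ℂ) (hinv : IsUnit (Φ * Φᴴ))
    (γ : ℝ) (hγ : 0 ≤ γ) (hPRIC : IsPRIC L Φ t γ) (U V : Matrix (Fin N) (Fin L) ℂ)
    (hsupp : (rowSupp U ∪ rowSupp V).card ≤ t) :
    ‖Matrix.trace (Uᴴ * ((1 - Φᴴ * (Φ * Φᴴ)⁻¹ * Φ) * V))‖ ≤
      γ * frobNorm U * frobNorm V := by
  classical
  set A := Φ * Φᴴ with hA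
  have hdet : IsUnit A.det := (Matrix.isUnit_iff_isUnit_det A).mp hinv
  have hinvA : A⁻¹ * A = 1 := Matrix.nonsing_inv_mul A hdet
  have hAH : Aᴴ = A := by simp [hA, Matrix.conjTranspose_mul]
  have hAiH : (A⁻¹)ᴴ = A⁻¹ := by rw [Matrix.conjTranspose_nonsing_inv, hAH]
  set P := Φᴴ * A⁻¹ * Φ with hP
  have hPH : Pᴴ = P := by
    rw [hP, Matrix.conjTranspose_mul, Matrix.conjTranspose_mul, hAiH,
      Matrix.conjTranspose_conjTranspose, Matrix.mul_assoc]
  have hPP : P * P = P := by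
    simp only [hP, Matrix.mul_assoc]
    rw [← Matrix.mul_assoc Φ Φᴴ, ← hA, ← Matrix.mul_assoc A⁻¹ A, hinvA, Matrix.one_mul]
  set Q := (1 : Matrix (Fin N) (Fin N) ℂ) - P with hQ
  have hQH : Qᴴ = Q := by
    rw [hQ, Matrix.conjTranspose_sub, hPH, Matrix.conjTranspose_one]
  have hQQ : Q * Q = Q := by
    rw [hQ, Matrix.sub_mul, Matrix.one_mul, Matrix.mul_sub, Matrix.mul_one, hPP,
      sub_self, sub_zero]
  have hkey : Uᴴ * (Q * V) = (Q * U)ᴴ * (Q * V) := by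
    rw [Matrix.conjTranspose_mul, hQH, Matrix.mul_assoc, ← Matrix.mul_assoc Q Q V, hQQ]
  have hbound : ∀ Z : Matrix (Fin N) (Fin L) ℂ, (rowSupp Z).card ≤ t →
      frobNorm (Q * Z) ^ 2 ≤ γ * frobNorm Z ^ 2 := by
    intro Z hZ
    have hpric := hPRIC Z hZ
    have htr : (Φ * Z)ᴴ * (A⁻¹ * (Φ * Z)) = Zᴴ * (P * Z) := by
      rw [Matrix.conjTranspose_mul]
      simp only [hP, Matrix.mul_assoc]
    rw [htr] at hpric
    have e1 : frobNorm (Q * Z) ^ 2 = frobNorm Z ^ 2 - (Matrix.trace (Zᴴ * (P * Z))).re := by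
      have h2 : (Q * Z)ᴴ * (Q * Z) = Zᴴ * (Q * Z) := by
        rw [Matrix.conjTranspose_mul, hQH, Matrix.mul_assoc, ← Matrix.mul_assoc Q Q Z, hQQ]
      have h3 : Zᴴ * (Q * Z) = Zᴴ * Z - Zᴴ * (P * Z) := by
        rw [hQ, Matrix.sub_mul, Matrix.one_mul, Matrix.mul_sub]
      have h4 := trace_conjTranspose_mul_self (Q * Z)
      rw [h2, h3, Matrix.trace_sub, trace_conjTranspose_mul_self Z] at h4
      have h5 := congrArg Complex.re h4
      simp only [Complex.sub_re, Complex.ofReal_re] at h5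
      linarith
    rw [e1]
    nlinarith [frobNorm_nonneg Z]
  have hU : (rowSupp U).card ≤ t :=
    le_trans (Finset.card_le_card Finset.subset_union_left) hsupp
  have hV : (rowSupp V).card ≤ t :=
    le_trans (Finset.card_le_card Finset.subset_union_right) hsupp
  have bU := hbound U hU
  have bV := hbound V hV
  have s1 : frobNorm (Q * U) ≤ Real.sqrt γ * frobNorm U := by
    rw [← Real.sqrt_sq (frobNorm_nonneg (Q * U))]
    calc Real.sqrt (frobNorm (Q * U) ^ 2) ≤ Real.sqrt (γ * frobNorm U ^ 2) :=
          Real.sqrt_le_sqrt bU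
      _ = Real.sqrt γ * frobNorm U := by
          rw [Real.sqrt_mul hγ, Real.sqrt_sq (frobNorm_nonneg U)]
  have s2 : frobNorm (Q * V) ≤ Real.sqrt γ * frobNorm V := by
    rw [← Real.sqrt_sq (frobNorm_nonneg (Q * V))]
    calc Real.sqrt (frobNorm (Q * V) ^ 2) ≤ Real.sqrt (γ * frobNorm V ^ 2) :=
          Real.sqrt_le_sqrt bV
      _ = Real.sqrt γ * frobNorm V := by
          rw [Real.sqrt_mul hγ, Real.sqrt_sq (frobNorm_nonneg V)]
  have hγγ : Real.sqrt γ * Real.sqrt γ = γ := Real.mul_self_sqrt hγ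
  calc ‖Matrix.trace (Uᴴ * (Q * V))‖
      = ‖Matrix.trace ((Q * U)ᴴ * (Q * V))‖ := by rw [hkey]
    _ ≤ frobNorm (Q * U) * frobNorm (Q * V) := trace_cs _ _
    _ ≤ (Real.sqrt γ * frobNorm U) * (Real.sqrt γ * frobNorm V) := by
        exact mul_le_mul s1 s2 (frobNorm_nonneg _)
          (mul_nonneg (Real.sqrt_nonneg _) (frobNorm_nonneg _))
    _ = γ * frobNorm U * frobNorm V := by rw [mul_mul_mul_comm, hγγ, mul_assoc]
end

section
/- Let Φ ∈ ℂ^{M×N} with ΦΦ* invertible, and let γ ≥ 0 be a preconditioned restricted isometry constant of order t for Φ. If V ∈ ℂ^{N×L} and R ⊆ {1,…,N} satisfy |R ∪ supp(V)| ≤ t, then ‖[(I − Φ*(ΦΦ*)⁻¹Φ)V]_(R)‖_F ≤ γ · ‖V‖_F. -/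
open Matrix BigOperators

noncomputable def S2' {N L : ℕ} (A : Matrix (Fin N) (Fin L) ℂ) : ℝ := ∑ i, ∑ j, ‖A i j‖ ^ 2

lemma S2'_nonneg {N L : ℕ} (A : Matrix (Fin N) (Fin L) ℂ) : 0 ≤ S2' A := by
  apply Finset.sum_nonneg; intro i _; apply Finset.sum_nonneg; intro j _; positivity

lemma tre_eq {N L : ℕ} (A B : Matrix (Fin N) (Fin L) ℂ) :
    (Matrix.trace (Aᴴ * B)).re = ∑ i, ∑ j, (star (A i j) * B i j).re := by
  simp [Matrix.trace, Matrix.diag, Matrix.mul_apply, Matrix.conjTranspose_apply,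
    Complex.re_sum]
  exact Finset.sum_comm

lemma tre_self {N L : ℕ} (A : Matrix (Fin N) (Fin L) ℂ) :
    (Matrix.trace (Aᴴ * A)).re = S2' A := by
  rw [tre_eq, S2']
  congr 1; ext i; congr 1; ext j
  have : star (A i j) * A i j = (Complex.normSq (A i j) : ℂ) := by
    rw [Complex.star_def, Complex.normSq_eq_conj_mul_self]
  rw [this, Complex.ofReal_re, ← Complex.sq_norm]

lemma tre_CS {N L : ℕ} (A B : Matrix (Fin N) (Fin L) ℂ) :
    (Matrix.trace (Aᴴ * B)).re ≤ Real.sqrt (S2' A) * Real.sqrt (S2' B) := by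
  rw [tre_eq]
  have h1 : ∀ i j, (star (A i j) * B i j).re ≤ ‖A i j‖ * ‖B i j‖ := by
    intro i j
    calc (star (A i j) * B i j).re ≤ ‖star (A i j) * B i j‖ :=
          Complex.re_le_norm _
      _ = ‖A i j‖ * ‖B i j‖ := by rw [norm_mul, norm_star]
  have key : ∑ p : Fin N × Fin L, ‖A p.1 p.2‖ * ‖B p.1 p.2‖ ≤
      Real.sqrt (∑ p : Fin N × Fin L, ‖A p.1 p.2‖ ^ 2) *
      Real.sqrt (∑ p : Fin N × Fin L, ‖B p.1 p.2‖ ^ 2) :=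
    Real.sum_mul_le_sqrt_mul_sqrt _ _ _
  have e1 : S2' A = ∑ p : Fin N × Fin L, ‖A p.1 p.2‖ ^ 2 := by
    rw [S2']; exact (Fintype.sum_prod_type (fun p : Fin N × Fin L => ‖A p.1 p.2‖ ^ 2)).symm
  have e2 : S2' B = ∑ p : Fin N × Fin L, ‖B p.1 p.2‖ ^ 2 := by
    rw [S2']; exact (Fintype.sum_prod_type (fun p : Fin N × Fin L => ‖B p.1 p.2‖ ^ 2)).symm
  rw [e1, e2]
  refine le_trans ?_ key
  rw [Fintype.sum_prod_type]
  apply Finset.sum_le_sum; intro i _; apply Finset.sum_le_sum; intro j _; exact h1 i j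

/-- preconditioned RIP restricted-rows estimate (second part of Remark 5). -/
theorem stmt3 {M N L t : ℕ} (Φ : Matrix (Fin M) (Fin N) ℂ) (hinv : IsUnit (Φ * Φᴴ))
    (γ : ℝ) (hγ : 0 ≤ γ) (hPRIC : IsPRIC L Φ t γ) (V : Matrix (Fin N) (Fin L) ℂ)
    (R : Finset (Fin N)) (hsupp : (R ∪ rowSupp V).card ≤ t) :
    frobNorm (rowRestrict R ((1 - Φᴴ * (Φ * Φᴴ)⁻¹ * Φ) * V)) ≤ γ * frobNorm V := by
  have hdet : IsUnit (Φ * Φᴴ).det := (Matrix.isUnit_iff_isUnit_det _).mp hinv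
  set P : Matrix (Fin N) (Fin N) ℂ := Φᴴ * (Φ * Φᴴ)⁻¹ * Φ with hP
  set Q : Matrix (Fin N) (Fin N) ℂ := 1 - P with hQdef
  set W : Matrix (Fin N) (Fin L) ℂ := rowRestrict R (Q * V) with hWdef
  -- Hermitian-ness of P
  have hSherm : (Φ * Φᴴ)ᴴ = Φ * Φᴴ := by
    rw [Matrix.conjTranspose_mul, Matrix.conjTranspose_conjTranspose]
  have hSinvherm : ((Φ * Φᴴ)⁻¹)ᴴ = (Φ * Φᴴ)⁻¹ := by
    rw [Matrix.conjTranspose_nonsing_inv, hSherm]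
  have hPherm : Pᴴ = P := by
    rw [hP, Matrix.conjTranspose_mul, Matrix.conjTranspose_mul, hSinvherm,
      Matrix.conjTranspose_conjTranspose, Matrix.mul_assoc]
  have hcore : Φ * (Φᴴ * ((Φ * Φᴴ)⁻¹ * Φ)) = Φ := by
    rw [← Matrix.mul_assoc Φᴴ, ← Matrix.mul_assoc Φ, ← Matrix.mul_assoc Φ Φᴴ,
      Matrix.mul_nonsing_inv _ hdet, Matrix.one_mul]
  have hPP : P * P = P := by
    rw [hP]
    simp only [Matrix.mul_assoc]
    rw [hcore]
  have hQherm : Qᴴ = Q := by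
    rw [hQdef, Matrix.conjTranspose_sub, hPherm, Matrix.conjTranspose_one]
  have hQQ : Q * Q = Q := by
    rw [hQdef, Matrix.sub_mul, Matrix.mul_sub, Matrix.mul_sub, Matrix.one_mul,
      Matrix.mul_one, Matrix.one_mul, hPP]
    abel
  -- frobNorm squared equals S2'
  have hfrob : ∀ (A : Matrix (Fin N) (Fin L) ℂ), frobNorm A = Real.sqrt (S2' A) :=
    fun A => rfl
  have hfrob2 : ∀ (A : Matrix (Fin N) (Fin L) ℂ), frobNorm A ^ 2 = S2' A := by
    intro A
    rw [hfrob, Real.sq_sqrt (S2'_nonneg A)]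
  -- P-RIC consequence: S2' (Q*Z) ≤ γ * S2' Z for t row-sparse Z
  have hQbound : ∀ Z : Matrix (Fin N) (Fin L) ℂ, (rowSupp Z).card ≤ t →
      S2' (Q * Z) ≤ γ * S2' Z := by
    intro Z hZ
    have h1 := hPRIC Z hZ
    rw [hfrob2] at h1
    have htr : Matrix.trace ((Φ * Z)ᴴ * ((Φ * Φᴴ)⁻¹ * (Φ * Z))) =
        Matrix.trace (Zᴴ * (P * Z)) := by
      rw [hP, Matrix.conjTranspose_mul]
      simp only [Matrix.mul_assoc]
    rw [htr] at h1
    have h2 : S2' (Q * Z) = (Matrix.trace (Zᴴ * Z)).re - (Matrix.trace (Zᴴ * (P * Z))).re := by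
      rw [← tre_self]
      have h3 : (Q * Z)ᴴ * (Q * Z) = Zᴴ * (Q * Z) := by
        rw [Matrix.conjTranspose_mul, Matrix.mul_assoc, hQherm, ← Matrix.mul_assoc Q Q Z, hQQ]
      rw [h3, hQdef, Matrix.sub_mul, Matrix.one_mul, Matrix.mul_sub, Matrix.trace_sub]
      simp [Complex.sub_re]
    have h4 : (Matrix.trace (Zᴴ * Z)).re = S2' Z := tre_self Z
    rw [h2, h4]
    linarith
  -- S2' W = Re trace (Wᴴ * (Q * V))
  have hWtr : S2' W = (Matrix.trace (Wᴴ * (Q * V))).re := by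
    rw [tre_eq, S2']
    apply Finset.sum_congr rfl
    intro i _
    apply Finset.sum_congr rfl
    intro j _
    by_cases hi : i ∈ R
    · have hW : W i j = (Q * V) i j := by simp [hWdef, rowRestrict, hi]
      rw [hW]
      have : star ((Q * V) i j) * (Q * V) i j = (Complex.normSq ((Q * V) i j) : ℂ) := by
        rw [Complex.star_def, Complex.normSq_eq_conj_mul_self]
      rw [this, Complex.ofReal_re, ← Complex.sq_norm]
    · have hW : W i j = 0 := by simp [hWdef, rowRestrict, hi]
      rw [hW]
      simp
  -- pass to (Q*W)ᴴ(Q*V)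
  have hWtr2 : (Matrix.trace (Wᴴ * (Q * V))).re = (Matrix.trace ((Q * W)ᴴ * (Q * V))).re := by
    congr 2
    rw [Matrix.conjTranspose_mul, Matrix.mul_assoc, hQherm, ← Matrix.mul_assoc Q Q V, hQQ]
  -- sparsity
  have hWsupp : rowSupp W ⊆ R := by
    intro i hi
    simp only [rowSupp, Finset.mem_filter] at hi
    by_contra hiR
    exact hi.2 (funext fun j => by simp [hWdef, rowRestrict, hiR])
  have hWcard : (rowSupp W).card ≤ t :=
    le_trans (Finset.card_le_card (hWsupp.trans Finset.subset_union_left)) hsupp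
  have hVcard : (rowSupp V).card ≤ t :=
    le_trans (Finset.card_le_card Finset.subset_union_right) hsupp
  -- chain
  have hchain : S2' W ≤ γ * (Real.sqrt (S2' W) * Real.sqrt (S2' V)) := by
    calc S2' W = (Matrix.trace ((Q * W)ᴴ * (Q * V))).re := by rw [hWtr, hWtr2]
      _ ≤ Real.sqrt (S2' (Q * W)) * Real.sqrt (S2' (Q * V)) := tre_CS _ _
      _ ≤ Real.sqrt (γ * S2' W) * Real.sqrt (γ * S2' V) := by
          apply mul_le_mul (Real.sqrt_le_sqrt (hQbound W hWcard))
            (Real.sqrt_le_sqrt (hQbound V hVcard)) (Real.sqrt_nonneg _) (Real.sqrt_nonneg _)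
      _ = γ * (Real.sqrt (S2' W) * Real.sqrt (S2' V)) := by
          rw [Real.sqrt_mul hγ, Real.sqrt_mul hγ]
          have hss : Real.sqrt γ * Real.sqrt γ = γ := Real.mul_self_sqrt hγ
          calc Real.sqrt γ * Real.sqrt (S2' W) * (Real.sqrt γ * Real.sqrt (S2' V))
              = Real.sqrt γ * Real.sqrt γ * (Real.sqrt (S2' W) * Real.sqrt (S2' V)) := by ring
            _ = γ * (Real.sqrt (S2' W) * Real.sqrt (S2' V)) := by rw [hss]
  rw [hfrob, hfrob]
  set a := Real.sqrt (S2' W) with ha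
  set b := Real.sqrt (S2' V) with hb
  have ha2 : a ^ 2 = S2' W := Real.sq_sqrt (S2'_nonneg W)
  have hanneg : 0 ≤ a := Real.sqrt_nonneg _
  have hbnneg : 0 ≤ b := Real.sqrt_nonneg _
  rcases eq_or_lt_of_le hanneg with h | h
  · rw [← h]; positivity
  · nlinarith [hchain, ha2]
end

section
/- Let Φ ∈ ℂ^{M×N} with ΦΦ* invertible, and let θ ≥ 0 be an upper restricted isometry constant of order t for (ΦΦ*)⁻¹Φ. Then for every E ∈ ℂ^{M×L} and every index set T ⊆ {1,…,N} with |T| ≤ t, one has ‖[Φ*(ΦΦ*)⁻¹E]_(T)‖_F ≤ √(1+θ) · ‖E‖_F. -/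
open Matrix BigOperators

noncomputable def vecE {a b : ℕ} (A : Matrix (Fin a) (Fin b) ℂ) : EuclideanSpace ℂ (Fin a × Fin b) :=
  WithLp.toLp 2 (fun p : Fin a × Fin b => A p.1 p.2)

lemma frob_eq {a b : ℕ} (A : Matrix (Fin a) (Fin b) ℂ) : frobNorm A = ‖vecE A‖ := by
  rw [frobNorm, EuclideanSpace.norm_eq, Fintype.sum_prod_type]; rfl

lemma inner_vecE {a b : ℕ} (A B : Matrix (Fin a) (Fin b) ℂ) :
    (inner ℂ (vecE A) (vecE B) : ℂ) = ∑ i, ∑ j, (starRingEnd ℂ) (A i j) * B i j := by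
  rw [PiLp.inner_apply, Fintype.sum_prod_type]
  exact Finset.sum_congr rfl fun i _ => Finset.sum_congr rfl fun j _ => by
    simp [vecE, mul_comm]

lemma adj_move {m n l : ℕ} (B : Matrix (Fin m) (Fin n) ℂ) (X : Matrix (Fin n) (Fin l) ℂ)
    (E : Matrix (Fin m) (Fin l) ℂ) :
    (inner ℂ (vecE X) (vecE (Bᴴ * E)) : ℂ) = inner ℂ (vecE (B * X)) (vecE E) := by
  rw [inner_vecE, inner_vecE]
  simp only [Matrix.mul_apply, Matrix.conjTranspose_apply, Finset.mul_sum, Finset.sum_mul,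
    map_sum, _root_.map_mul]
  rw [Finset.sum_comm]
  conv_rhs => rw [Finset.sum_comm]
  refine Finset.sum_congr rfl fun j _ => ?_
  rw [Finset.sum_comm]
  exact Finset.sum_congr rfl fun k _ => Finset.sum_congr rfl fun i _ =>
    by simp only [starRingEnd_apply]; ring

lemma frobNorm_nonneg_s4 {a b : ℕ} (A : Matrix (Fin a) (Fin b) ℂ) : 0 ≤ frobNorm A :=
  Real.sqrt_nonneg _


/-- Lemma 6 of the paper. -/
theorem stmt4 {M N L t : ℕ} (Φ : Matrix (Fin M) (Fin N) ℂ) (hinv : IsUnit (Φ * Φᴴ))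
    (θ : ℝ) (hθ : 0 ≤ θ) (hURIC : IsUpperRIC L ((Φ * Φᴴ)⁻¹ * Φ) t θ)
    (E : Matrix (Fin M) (Fin L) ℂ) (T : Finset (Fin N)) (hT : T.card ≤ t) :
    frobNorm (rowRestrict T (Φᴴ * ((Φ * Φᴴ)⁻¹ * E))) ≤ Real.sqrt (1 + θ) * frobNorm E := by
  
  set A : Matrix (Fin M) (Fin N) ℂ := (Φ * Φᴴ)⁻¹ * Φ with hA
  set W : Matrix (Fin N) (Fin L) ℂ := Φᴴ * ((Φ * Φᴴ)⁻¹ * E) with hW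
  set Y : Matrix (Fin N) (Fin L) ℂ := rowRestrict T W with hY
  have hAH : Aᴴ = Φᴴ * (Φ * Φᴴ)⁻¹ := by
    rw [hA, conjTranspose_mul, conjTranspose_nonsing_inv, conjTranspose_mul,
      conjTranspose_conjTranspose]
  have hWA : W = Aᴴ * E := by rw [hAH, hW, Matrix.mul_assoc]
  -- row support of Y
  have hsupp : (rowSupp Y).card ≤ t := by
    refine le_trans (Finset.card_le_card ?_) hT
    intro i hi
    classical
    rw [rowSupp, Finset.mem_filter] at hi
    by_contra hiT
    exact hi.2 (funext fun j => by simp [hY, rowRestrict, hiT])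
  -- key identity
  have key : (frobNorm Y) ^ 2 = (inner ℂ (vecE (A * Y)) (vecE E) : ℂ).re := by
    rw [← adj_move, ← hWA]
    have h1 : (inner ℂ (vecE Y) (vecE W) : ℂ) = inner ℂ (vecE Y) (vecE Y) := by
      rw [inner_vecE, inner_vecE]
      refine Finset.sum_congr rfl fun i _ => Finset.sum_congr rfl fun j _ => ?_
      by_cases hiT : i ∈ T <;> simp [hY, rowRestrict, hiT]
    rw [h1, frob_eq]
    exact (inner_self_eq_norm_sq (𝕜 := ℂ) (vecE Y)).symm
  -- bound on A*Y
  have hAY : frobNorm (A * Y) ≤ Real.sqrt (1 + θ) * frobNorm Y := by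
    have h2 := hURIC Y hsupp
    have := Real.sqrt_le_sqrt h2
    rwa [Real.sqrt_sq (frobNorm_nonneg_s4 _), Real.sqrt_mul (by linarith),
      Real.sqrt_sq (frobNorm_nonneg_s4 _)] at this
  have hCS : (inner ℂ (vecE (A * Y)) (vecE E) : ℂ).re ≤ frobNorm (A * Y) * frobNorm E := by
    rw [frob_eq, frob_eq]; exact re_inner_le_norm (𝕜 := ℂ) _ _
  have hmain : frobNorm Y ^ 2 ≤ (Real.sqrt (1 + θ) * frobNorm E) * frobNorm Y := by
    calc frobNorm Y ^ 2 = (inner ℂ (vecE (A * Y)) (vecE E) : ℂ).re := key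
      _ ≤ frobNorm (A * Y) * frobNorm E := hCS
      _ ≤ (Real.sqrt (1 + θ) * frobNorm Y) * frobNorm E :=
          mul_le_mul_of_nonneg_right hAY (frobNorm_nonneg_s4 _)
      _ = (Real.sqrt (1 + θ) * frobNorm E) * frobNorm Y := by ring
  rcases eq_or_lt_of_le (frobNorm_nonneg_s4 Y) with h0 | h0
  · rw [← h0]
    exact mul_nonneg (Real.sqrt_nonneg _) (frobNorm_nonneg_s4 _)
  · have h2 : frobNorm Y * frobNorm Y ≤ (Real.sqrt (1 + θ) * frobNorm E) * frobNorm Y := by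
      nlinarith [hmain]
    exact le_of_mul_le_mul_right h2 h0
end

section
/- Let X̃ ∈ ℂ^{N×L}, Q ∈ ℂ^{N×L} with orthonormal columns (Q*Q = I_L), and R ∈ ℂ^{L×L} invertible with X̃ = QR. Let σ_min(R) and σ_max(R) denote the smallest and largest singular values of R. If T ⊆ {1,…,N} is such that ‖Q_{i·}‖₂ ≥ ‖Q_{j·}‖₂ for every i ∈ T and j ∉ T (T collects rows of Q of largest ℓ₂ norm), and S ⊆ {1,…,N} satisfies |S| ≤ |T|, then σ_max(R)⁻¹ · ‖X̃_(S)‖_F ≤ σ_min(R)⁻¹ · ‖X̃_(T)‖_F. -/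
open Matrix BigOperators

section AuxLemmas

/-- Bridge to `EuclideanSpace`. -/
noncomputable def euc {L : ℕ} (v : Fin L → ℂ) : EuclideanSpace ℂ (Fin L) :=
  (WithLp.equiv 2 (Fin L → ℂ)).symm v

lemma vecNorm_eq_norm {L : ℕ} (v : Fin L → ℂ) : vecNorm v = ‖euc v‖ := by
  rw [EuclideanSpace.norm_eq]; rfl

lemma euc_mulVec {L : ℕ} (A : Matrix (Fin L) (Fin L) ℂ) (v : Fin L → ℂ) :
    euc (A.mulVec v) = Matrix.toEuclideanCLM (𝕜 := ℂ) A (euc v) := by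
  simp [euc]

lemma mulVec_norm_le {L : ℕ} (A : Matrix (Fin L) (Fin L) ℂ) (v : Fin L → ℂ) :
    vecNorm (A.mulVec v) ≤ ‖Matrix.toEuclideanCLM (𝕜 := ℂ) A‖ * vecNorm v := by
  rw [vecNorm_eq_norm, vecNorm_eq_norm, euc_mulVec]
  exact (Matrix.toEuclideanCLM (𝕜 := ℂ) A).le_opNorm _

lemma norm_clm_conjT {L : ℕ} (A : Matrix (Fin L) (Fin L) ℂ) :
    ‖Matrix.toEuclideanCLM (𝕜 := ℂ) Aᴴ‖ = ‖Matrix.toEuclideanCLM (𝕜 := ℂ) A‖ := by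
  rw [show Aᴴ = star A from rfl, map_star, ContinuousLinearMap.star_eq_adjoint]
  exact ContinuousLinearMap.adjoint.norm_map _

lemma vecNorm_smul' {L : ℕ} (c : ℂ) (v : Fin L → ℂ) : vecNorm (c • v) = ‖c‖ * vecNorm v := by
  rw [vecNorm_eq_norm, vecNorm_eq_norm, show euc (c • v) = c • euc v from rfl, norm_smul]

lemma vecNorm_star {L : ℕ} (v : Fin L → ℂ) : vecNorm (star v) = vecNorm v := by
  unfold vecNorm
  congr 1
  exact Finset.sum_congr rfl fun i _ => by simp

lemma vecNorm_nonneg {ι : Type*} [Fintype ι] (v : ι → ℂ) : 0 ≤ vecNorm v := Real.sqrt_nonneg _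

lemma vecNorm_single {L : ℕ} (i0 : Fin L) : vecNorm (Pi.single i0 (1:ℂ)) = 1 := by
  unfold vecNorm
  have h : (∑ i : Fin L, ‖(Pi.single i0 (1:ℂ) : Fin L → ℂ) i‖ ^ 2) = 1 := by
    rw [Finset.sum_eq_single i0]
    · simp
    · intro b _ hb; simp [Pi.single_apply, hb]
    · simp
  rw [h, Real.sqrt_one]

lemma sum_le_of_card_le {N : ℕ} (S T : Finset (Fin N)) (f : Fin N → ℝ) (hf : ∀ i, 0 ≤ f i)
    (h : ∀ i ∈ T, ∀ j ∉ T, f j ≤ f i) (hc : S.card ≤ T.card) :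
    ∑ i ∈ S, f i ≤ ∑ i ∈ T, f i := by
  have key : ∑ i ∈ S \ T, f i ≤ ∑ i ∈ T \ S, f i := by
    rcases (S \ T).eq_empty_or_nonempty with he | hne
    · rw [he, Finset.sum_empty]
      exact Finset.sum_nonneg fun i _ => hf i
    · have hcard : (S \ T).card ≤ (T \ S).card := by
        have h1 := Finset.card_sdiff_add_card_inter S T
        have h2 := Finset.card_sdiff_add_card_inter T S
        rw [Finset.inter_comm] at h2
        omega
      have hTS : (T \ S).Nonempty := by
        rw [← Finset.card_pos] at hne ⊢; omega
      obtain ⟨i₀, hi₀, hmin⟩ := Finset.exists_min_image (T \ S) f hTS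
      have hi₀T : i₀ ∈ T := (Finset.mem_sdiff.mp hi₀).1
      calc ∑ i ∈ S \ T, f i ≤ ∑ _i ∈ S \ T, f i₀ :=
            Finset.sum_le_sum fun j hj => h i₀ hi₀T j (Finset.mem_sdiff.mp hj).2
        _ = (S \ T).card * f i₀ := by rw [Finset.sum_const, nsmul_eq_mul]
        _ ≤ (T \ S).card * f i₀ :=
            mul_le_mul_of_nonneg_right (by exact_mod_cast hcard) (hf i₀)
        _ = ∑ _i ∈ T \ S, f i₀ := by rw [Finset.sum_const, nsmul_eq_mul]
        _ ≤ ∑ i ∈ T \ S, f i := Finset.sum_le_sum fun i hi => hmin i hi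
  have e1 : ∑ i ∈ S ∩ T, f i + ∑ i ∈ S \ T, f i = ∑ i ∈ S, f i :=
    Finset.sum_inter_add_sum_sdiff S T f
  have e2 : ∑ i ∈ T ∩ S, f i + ∑ i ∈ T \ S, f i = ∑ i ∈ T, f i :=
    Finset.sum_inter_add_sum_sdiff T S f
  rw [Finset.inter_comm] at e2
  linarith

lemma frobNorm_eq_rows {N L : ℕ} (Z : Matrix (Fin N) (Fin L) ℂ) :
    frobNorm Z = Real.sqrt (∑ i, vecNorm (Z i) ^ 2) := by
  unfold frobNorm vecNorm
  congr 1
  exact Finset.sum_congr rfl fun i _ => (Real.sq_sqrt (by positivity)).symm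

lemma rowRestrict_mul {N L : ℕ} (S : Finset (Fin N)) (Q : Matrix (Fin N) (Fin L) ℂ)
    (R : Matrix (Fin L) (Fin L) ℂ) :
    rowRestrict S (Q * R) = rowRestrict S Q * R := by
  ext i j
  by_cases hi : i ∈ S <;> simp [rowRestrict, Matrix.mul_apply, hi]

lemma rowRestrict_apply {N L : ℕ} (S : Finset (Fin N)) (Q : Matrix (Fin N) (Fin L) ℂ) (i : Fin N) :
    rowRestrict S Q i = if i ∈ S then Q i else 0 := by
  funext j; by_cases hi : i ∈ S <;> simp [rowRestrict, hi]

lemma row_mul_eq {N L : ℕ} (Z : Matrix (Fin N) (Fin L) ℂ) (R : Matrix (Fin L) (Fin L) ℂ)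
    (i : Fin N) : vecNorm ((Z * R) i) = vecNorm (Rᴴ.mulVec (star (Z i))) := by
  unfold vecNorm
  congr 1
  refine Finset.sum_congr rfl fun j _ => ?_
  have h : (Rᴴ.mulVec (star (Z i))) j = star ((Z * R) i j) := by
    simp only [Matrix.mulVec, dotProduct, Matrix.conjTranspose_apply, Pi.star_apply,
      Matrix.mul_apply, star_sum, star_mul']
    exact Finset.sum_congr rfl fun k _ => mul_comm _ _
  rw [h, norm_star]

lemma sum_sq_rowRestrict {N L : ℕ} (S : Finset (Fin N)) (Q : Matrix (Fin N) (Fin L) ℂ) :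
    ∑ i, vecNorm (rowRestrict S Q i) ^ 2 = ∑ i ∈ S, vecNorm (Q i) ^ 2 := by
  have h : ∀ i, vecNorm (rowRestrict S Q i) ^ 2 = if i ∈ S then vecNorm (Q i) ^ 2 else 0 := by
    intro i
    rw [rowRestrict_apply]
    split
    · rfl
    · simp [vecNorm]
  simp_rw [h]
  rw [Finset.sum_ite_mem, Finset.univ_inter]

end AuxLemmas

/-- comparison of restricted Frobenius norms through an orthonormal factorization. -/
theorem stmt6 {N L : ℕ} (X Q : Matrix (Fin N) (Fin L) ℂ) (R : Matrix (Fin L) (Fin L) ℂ)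
    (hQ : Qᴴ * Q = 1) (hR : IsUnit R) (hX : X = Q * R)
    (T S : Finset (Fin N))
    (hT : ∀ i ∈ T, ∀ j ∉ T, vecNorm (Q j) ≤ vecNorm (Q i))
    (hS : S.card ≤ T.card) :
    (sigmaMax R)⁻¹ * frobNorm (rowRestrict S X) ≤ (sigmaMin R)⁻¹ * frobNorm (rowRestrict T X) := by
  rcases Nat.eq_zero_or_pos L with hL | hL
  · subst hL
    simp [frobNorm]
  haveI : Nonempty (Fin L) := ⟨⟨0, hL⟩⟩
  classical
  subst hX
  set f := Matrix.toEuclideanCLM (𝕜 := ℂ) R with hf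
  set g := Matrix.toEuclideanCLM (𝕜 := ℂ) R⁻¹ with hg
  have hdet : IsUnit R.det := (Matrix.isUnit_iff_isUnit_det R).mp hR
  have hinv : R⁻¹ * R = 1 := Matrix.nonsing_inv_mul R hdet
  have hinv' : R * R⁻¹ = 1 := Matrix.mul_nonsing_inv R hdet
  have hcan : ∀ v : Fin L → ℂ, R⁻¹.mulVec (R.mulVec v) = v := fun v => by
    rw [Matrix.mulVec_mulVec, hinv, Matrix.one_mulVec]
  have hcan' : ∀ v : Fin L → ℂ, R.mulVec (R⁻¹.mulVec v) = v := fun v => by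
    rw [Matrix.mulVec_mulVec, hinv', Matrix.one_mulVec]
  have hconjinv : (R⁻¹)ᴴ * Rᴴ = 1 := by
    rw [← Matrix.conjTranspose_mul, hinv', Matrix.conjTranspose_one]
  have hcanH : ∀ v : Fin L → ℂ, (R⁻¹)ᴴ.mulVec (Rᴴ.mulVec v) = v := fun v => by
    rw [Matrix.mulVec_mulVec, hconjinv, Matrix.one_mulVec]
  set nf := ‖f‖ with hnf
  set ng := ‖g‖ with hngdef
  have ub : ∀ v, vecNorm (R.mulVec v) ≤ nf * vecNorm v := mulVec_norm_le R
  have ubg : ∀ v, vecNorm (R⁻¹.mulVec v) ≤ ng * vecNorm v := mulVec_norm_le _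
  have ubH : ∀ v : Fin L → ℂ, vecNorm (Rᴴ.mulVec v) ≤ nf * vecNorm v := fun v => by
    have h := mulVec_norm_le Rᴴ v
    rwa [norm_clm_conjT] at h
  have ubgH : ∀ v : Fin L → ℂ, vecNorm ((R⁻¹)ᴴ.mulVec v) ≤ ng * vecNorm v := fun v => by
    have h := mulVec_norm_le (R⁻¹)ᴴ v
    rwa [norm_clm_conjT] at h
  obtain ⟨i0⟩ := (inferInstance : Nonempty (Fin L))
  set v0 : Fin L → ℂ := Pi.single i0 1 with hv0def
  have hv0 : vecNorm v0 = 1 := vecNorm_single i0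
  have hng0 : 0 < ng := by
    rcases lt_or_eq_of_le (norm_nonneg g) with h | h
    · exact h
    · exfalso
      have h1 : vecNorm v0 ≤ ng * vecNorm (R.mulVec v0) := by
        have h2 := ubg (R.mulVec v0); rwa [hcan] at h2
      rw [hv0, hngdef, ← h, zero_mul] at h1
      linarith
  have lb_aux : ∀ a b : ℝ, a ≤ ng * b → ng⁻¹ * a ≤ b := fun a b hab => by
    have h := mul_le_mul_of_nonneg_left hab (inv_nonneg.mpr hng0.le)
    rwa [← mul_assoc, inv_mul_cancel₀ hng0.ne', one_mul] at h
  have lbR : ∀ v, ng⁻¹ * vecNorm v ≤ vecNorm (R.mulVec v) := fun v =>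
    lb_aux _ _ (by have h := ubg (R.mulVec v); rwa [hcan v] at h)
  have lbH : ∀ v, ng⁻¹ * vecNorm v ≤ vecNorm (Rᴴ.mulVec v) := fun v =>
    lb_aux _ _ (by have h := ubgH (Rᴴ.mulVec v); rwa [hcanH v] at h)
  have hmem0 : vecNorm (R.mulVec v0) ∈ sigmaSet R := ⟨v0, hv0, rfl⟩
  have hbdd : BddAbove (sigmaSet R) := by
    refine ⟨nf, ?_⟩
    rintro c ⟨v, hv, rfl⟩
    calc vecNorm (R.mulVec v) ≤ nf * vecNorm v := ub v
      _ = nf := by rw [hv, mul_one]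
  have hne : (sigmaSet R).Nonempty := ⟨_, hmem0⟩
  have hbdd_below : BddBelow (sigmaSet R) :=
    ⟨0, by rintro c ⟨v, hv, rfl⟩; exact vecNorm_nonneg _⟩
  have hminlb : ng⁻¹ ≤ sigmaMin R := by
    apply le_csInf hne
    rintro c ⟨v, hv, rfl⟩
    have h := lbR v; rwa [hv, mul_one] at h
  have hminpos : 0 < sigmaMin R := lt_of_lt_of_le (inv_pos.mpr hng0) hminlb
  have hmaxmem : ∀ c ∈ sigmaSet R, c ≤ sigmaMax R := fun c hc => le_csSup hbdd hc
  have hmaxnn : 0 ≤ sigmaMax R := le_trans (vecNorm_nonneg _) (hmaxmem _ hmem0)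
  have hnf_le : nf ≤ sigmaMax R := by
    apply ContinuousLinearMap.opNorm_le_bound f hmaxnn
    intro x
    set v : Fin L → ℂ := WithLp.equiv 2 _ x with hvdef
    have hx : x = euc v := rfl
    by_cases h0 : vecNorm v = 0
    · have hxn : ‖x‖ = 0 := by rw [hx, ← vecNorm_eq_norm]; exact h0
      have hx0 : x = 0 := norm_eq_zero.mp hxn
      simp [hx0]
    · have hvpos : 0 < vecNorm v := lt_of_le_of_ne (vecNorm_nonneg v) (Ne.symm h0)
      set u : Fin L → ℂ := ((vecNorm v : ℝ) : ℂ)⁻¹ • v with hudef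
      have hcnorm : ‖((vecNorm v : ℝ) : ℂ)⁻¹‖ = (vecNorm v)⁻¹ := by
        rw [norm_inv, Complex.norm_real, Real.norm_eq_abs, abs_of_pos hvpos]
      have hu : vecNorm u = 1 := by
        rw [hudef, vecNorm_smul', hcnorm, inv_mul_cancel₀ hvpos.ne']
      have h1 : vecNorm (R.mulVec u) ≤ sigmaMax R := hmaxmem _ ⟨u, hu, rfl⟩
      have h2 : vecNorm (R.mulVec u) = (vecNorm v)⁻¹ * vecNorm (R.mulVec v) := by
        rw [hudef, Matrix.mulVec_smul, vecNorm_smul', hcnorm]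
      rw [h2] at h1
      have h3 : vecNorm (R.mulVec v) ≤ sigmaMax R * vecNorm v := by
        have h4 := mul_le_mul_of_nonneg_left h1 hvpos.le
        rwa [← mul_assoc, mul_inv_cancel₀ hvpos.ne', one_mul, mul_comm (vecNorm v)] at h4
      calc ‖f x‖ = vecNorm (R.mulVec v) := by rw [hx, ← euc_mulVec, ← vecNorm_eq_norm]
        _ ≤ sigmaMax R * vecNorm v := h3
        _ = sigmaMax R * ‖x‖ := by rw [hx, ← vecNorm_eq_norm]
  have hng_le : ng ≤ (sigmaMin R)⁻¹ := by
    apply ContinuousLinearMap.opNorm_le_bound g (inv_nonneg.mpr hminpos.le)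
    intro x
    set v : Fin L → ℂ := WithLp.equiv 2 _ x with hvdef
    have hx : x = euc v := rfl
    have hgx : ‖g x‖ = vecNorm (R⁻¹.mulVec v) := by
      rw [hx, ← euc_mulVec, ← vecNorm_eq_norm]
    have hxnorm : ‖x‖ = vecNorm v := by rw [hx, ← vecNorm_eq_norm]
    by_cases h0 : vecNorm (R⁻¹.mulVec v) = 0
    · rw [hgx, h0]
      have : 0 ≤ (sigmaMin R)⁻¹ * ‖x‖ := mul_nonneg (inv_nonneg.mpr hminpos.le) (norm_nonneg x)
      exact this
    · have hbpos : 0 < vecNorm (R⁻¹.mulVec v) :=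
        lt_of_le_of_ne (vecNorm_nonneg _) (Ne.symm h0)
      set b : ℝ := vecNorm (R⁻¹.mulVec v) with hbdef
      set u : Fin L → ℂ := ((b : ℝ) : ℂ)⁻¹ • R⁻¹.mulVec v with hudef
      have hcnorm : ‖((b : ℝ) : ℂ)⁻¹‖ = b⁻¹ := by
        rw [norm_inv, Complex.norm_real, Real.norm_eq_abs, abs_of_pos hbpos]
      have hu : vecNorm u = 1 := by
        rw [hudef, vecNorm_smul', hcnorm, hbdef, inv_mul_cancel₀ hbpos.ne']
      have h2 : vecNorm (R.mulVec u) = b⁻¹ * vecNorm v := by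
        rw [hudef, Matrix.mulVec_smul, vecNorm_smul', hcnorm, hcan' v]
      have h1 : sigmaMin R ≤ vecNorm (R.mulVec u) := csInf_le hbdd_below ⟨u, hu, rfl⟩
      rw [h2] at h1
      have h3 : b * sigmaMin R ≤ vecNorm v := by
        have h4 := mul_le_mul_of_nonneg_left h1 hbpos.le
        rwa [← mul_assoc, mul_inv_cancel₀ hbpos.ne', one_mul] at h4
      have h5 : b ≤ (sigmaMin R)⁻¹ * vecNorm v := by
        have h6 := mul_le_mul_of_nonneg_left h3 (inv_nonneg.mpr hminpos.le)
        rwa [mul_comm b (sigmaMin R), ← mul_assoc, inv_mul_cancel₀ hminpos.ne', one_mul] at h6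
      rw [hgx, hxnorm]
      exact h5
  have hnf0 : 0 < nf := by
    have h1 := lbR v0
    have h2 := ub v0
    rw [hv0, mul_one] at h1 h2
    exact lt_of_lt_of_le (inv_pos.mpr hng0) (le_trans h1 h2)
  have hmaxpos : 0 < sigmaMax R := lt_of_lt_of_le hnf0 hnf_le
  -- Frobenius estimates
  have hrowbound : ∀ (W : Finset (Fin N)) (i : Fin N),
      vecNorm ((rowRestrict W Q * R) i) ≤ nf * vecNorm (rowRestrict W Q i) ∧
      ng⁻¹ * vecNorm (rowRestrict W Q i) ≤ vecNorm ((rowRestrict W Q * R) i) := by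
    intro W i
    rw [row_mul_eq]
    constructor
    · have h := ubH (star (rowRestrict W Q i))
      rwa [vecNorm_star] at h
    · have h := lbH (star (rowRestrict W Q i))
      rwa [vecNorm_star] at h
  have hsum_a : ∑ i, vecNorm ((rowRestrict S Q * R) i) ^ 2 ≤
      nf ^ 2 * ∑ i ∈ S, vecNorm (Q i) ^ 2 := by
    calc ∑ i, vecNorm ((rowRestrict S Q * R) i) ^ 2
        ≤ ∑ i, (nf * vecNorm (rowRestrict S Q i)) ^ 2 :=
          Finset.sum_le_sum fun i _ =>
            pow_le_pow_left₀ (vecNorm_nonneg _) (hrowbound S i).1 2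
      _ = nf ^ 2 * ∑ i, vecNorm (rowRestrict S Q i) ^ 2 := by
          rw [Finset.mul_sum]
          exact Finset.sum_congr rfl fun i _ => by ring
      _ = nf ^ 2 * ∑ i ∈ S, vecNorm (Q i) ^ 2 := by rw [sum_sq_rowRestrict]
  have hsum_b : (ng⁻¹) ^ 2 * ∑ i ∈ T, vecNorm (Q i) ^ 2 ≤
      ∑ i, vecNorm ((rowRestrict T Q * R) i) ^ 2 := by
    calc (ng⁻¹) ^ 2 * ∑ i ∈ T, vecNorm (Q i) ^ 2
        = ∑ i, (ng⁻¹ * vecNorm (rowRestrict T Q i)) ^ 2 := by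
          rw [← sum_sq_rowRestrict T Q, Finset.mul_sum]
          exact Finset.sum_congr rfl fun i _ => by ring
      _ ≤ ∑ i, vecNorm ((rowRestrict T Q * R) i) ^ 2 :=
          Finset.sum_le_sum fun i _ =>
            pow_le_pow_left₀ (mul_nonneg (inv_nonneg.mpr hng0.le) (vecNorm_nonneg _))
              (hrowbound T i).2 2
  set qS : ℝ := Real.sqrt (∑ i ∈ S, vecNorm (Q i) ^ 2) with hqSdef
  set qT : ℝ := Real.sqrt (∑ i ∈ T, vecNorm (Q i) ^ 2) with hqTdef
  have ha : frobNorm (rowRestrict S (Q * R)) ≤ nf * qS := by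
    rw [rowRestrict_mul, frobNorm_eq_rows]
    calc Real.sqrt (∑ i, vecNorm ((rowRestrict S Q * R) i) ^ 2)
        ≤ Real.sqrt (nf ^ 2 * ∑ i ∈ S, vecNorm (Q i) ^ 2) := Real.sqrt_le_sqrt hsum_a
      _ = nf * qS := by
          rw [Real.sqrt_mul (sq_nonneg nf), Real.sqrt_sq hnf0.le, hqSdef]
  have hb : ng⁻¹ * qT ≤ frobNorm (rowRestrict T (Q * R)) := by
    rw [rowRestrict_mul, frobNorm_eq_rows]
    calc ng⁻¹ * qT = Real.sqrt ((ng⁻¹) ^ 2 * ∑ i ∈ T, vecNorm (Q i) ^ 2) := by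
          rw [Real.sqrt_mul (sq_nonneg _), Real.sqrt_sq (inv_nonneg.mpr hng0.le), hqTdef]
      _ ≤ Real.sqrt (∑ i, vecNorm ((rowRestrict T Q * R) i) ^ 2) := Real.sqrt_le_sqrt hsum_b
  have hq : qS ≤ qT := by
    apply Real.sqrt_le_sqrt
    exact sum_le_of_card_le S T (fun i => vecNorm (Q i) ^ 2)
      (fun i => sq_nonneg _)
      (fun i hi j hj => pow_le_pow_left₀ (vecNorm_nonneg _) (hT i hi j hj) 2) hS
  have step1 : (sigmaMax R)⁻¹ * frobNorm (rowRestrict S (Q * R)) ≤ qS := by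
    have h1 : frobNorm (rowRestrict S (Q * R)) ≤ sigmaMax R * qS :=
      le_trans ha (mul_le_mul_of_nonneg_right hnf_le (Real.sqrt_nonneg _))
    have h2 := mul_le_mul_of_nonneg_left h1 (inv_nonneg.mpr hmaxpos.le)
    rwa [← mul_assoc, inv_mul_cancel₀ hmaxpos.ne', one_mul] at h2
  have step2 : qT ≤ (sigmaMin R)⁻¹ * frobNorm (rowRestrict T (Q * R)) := by
    have h1 : qT ≤ ng * frobNorm (rowRestrict T (Q * R)) := by
      have h2 := mul_le_mul_of_nonneg_left hb hng0.le
      rwa [← mul_assoc, mul_inv_cancel₀ hng0.ne', one_mul] at h2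
    refine le_trans h1 (mul_le_mul_of_nonneg_right hng_le ?_)
    exact Real.sqrt_nonneg _
  exact le_trans step1 (le_trans hq step2)
end

section
/- Let Y = ΦX + E with Φ ∈ ℂ^{M×N}, X ∈ ℂ^{N×L} s row-sparse, and E ∈ ℂ^{M×L}. Let X̃ ∈ ℂ^{N×L} satisfy ΦX̃ = Y, let T ⊆ {1,…,N} with |T| = t be such that Φ_T*Φ_T is invertible, and let W̄ be the feedback of X̃: W̄_(T^c) = 0 and W̄_{(T)} = X̃_{(T)} + (Φ_T*Φ_T)⁻¹Φ_T*Φ_{T^c}X̃_{(T^c)}. If δ_{s+t} is a restricted isometry constant of order s+t for Φ and δ_t is a restricted isometry constant of order t for Φ, then ‖(X − W̄)_(T)‖_F ≤ δ_{s+t}·‖X − W̄‖_F + √(1+δ_t)·‖E‖_F. -/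
open Matrix BigOperators

section fipLemmas
/-- Frobenius inner product (real part). -/
noncomputable def fip {m n : Type*} [Fintype m] [Fintype n] (A B : Matrix m n ℂ) : ℝ :=
  (Matrix.trace (Aᴴ * B)).re

variable {m n : Type*} [Fintype m] [Fintype n]

lemma fip_eq_sum (A B : Matrix m n ℂ) :
    fip A B = ∑ i, ∑ j, ((starRingEnd ℂ) (A i j) * B i j).re := by
  rw [fip, Matrix.trace]
  simp only [Matrix.diag, Matrix.mul_apply, Matrix.conjTranspose_apply]
  rw [Complex.re_sum]
  rw [Finset.sum_comm]
  congr 1; ext i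
  rw [Complex.re_sum]
  rfl

lemma fip_self (A : Matrix m n ℂ) : fip A A = frobNorm A ^ 2 := by
  rw [fip_eq_sum, frobNorm_sq]
  congr 1; ext i; congr 1; ext j
  rw [Complex.mul_re]
  rw [Complex.sq_norm, Complex.normSq_apply]
  simp

lemma frobNorm_eq_zero {A : Matrix m n ℂ} (h : frobNorm A = 0) : A = 0 := by
  have h2 : ∑ i, ∑ j, ‖A i j‖ ^ 2 = 0 := by
    rw [← frobNorm_sq, h]; ring
  ext i j
  have hi : ∀ i ∈ (Finset.univ : Finset m), (0:ℝ) ≤ ∑ j, ‖A i j‖ ^ 2 := by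
    intros; positivity
  have := (Finset.sum_eq_zero_iff_of_nonneg hi).mp h2 i (Finset.mem_univ i)
  have hj : ∀ j ∈ (Finset.univ : Finset n), (0:ℝ) ≤ ‖A i j‖ ^ 2 := by
    intros; positivity
  have := (Finset.sum_eq_zero_iff_of_nonneg hj).mp this j (Finset.mem_univ j)
  have : ‖A i j‖ = 0 := by nlinarith [norm_nonneg (A i j)]
  simpa using this

lemma fip_symm (A B : Matrix m n ℂ) : fip A B = fip B A := by
  rw [fip_eq_sum, fip_eq_sum]
  congr 1; ext i; congr 1; ext j
  rw [show (starRingEnd ℂ) (B i j) * A i j = (starRingEnd ℂ) ((starRingEnd ℂ) (A i j) * B i j) by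
    simp [mul_comm]]
  simp

lemma fip_add_left (A B C : Matrix m n ℂ) : fip (A + B) C = fip A C + fip B C := by
  simp [fip, Matrix.conjTranspose_add, Matrix.add_mul, Matrix.trace_add]

lemma fip_add_right (A B C : Matrix m n ℂ) : fip A (B + C) = fip A B + fip A C := by
  simp [fip, Matrix.mul_add, Matrix.trace_add]

lemma fip_neg_right (A B : Matrix m n ℂ) : fip A (-B) = - fip A B := by
  simp [fip, Matrix.mul_neg]

lemma fip_smul_left (c : ℝ) (A B : Matrix m n ℂ) :
    fip ((c : ℂ) • A) B = c * fip A B := by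
  simp only [fip_eq_sum, Matrix.smul_apply, smul_eq_mul, Finset.mul_sum]
  congr 1; ext i; congr 1; ext j
  rw [_root_.map_mul, Complex.conj_ofReal, mul_assoc, Complex.re_ofReal_mul]

lemma fip_smul_right (c : ℝ) (A B : Matrix m n ℂ) :
    fip A ((c : ℂ) • B) = c * fip A B := by
  rw [fip_symm, fip_smul_left, fip_symm]

lemma fip_cauchy (A B : Matrix m n ℂ) : fip A B ≤ frobNorm A * frobNorm B := by
  rw [fip_eq_sum, frobNorm, frobNorm]
  have h1 : ∀ i j, ((starRingEnd ℂ) (A i j) * B i j).re ≤ ‖A i j‖ * ‖B i j‖ := by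
    intro i j
    calc ((starRingEnd ℂ) (A i j) * B i j).re ≤ ‖(starRingEnd ℂ) (A i j) * B i j‖ :=
          Complex.re_le_norm _
      _ = ‖A i j‖ * ‖B i j‖ := by rw [norm_mul]; simp
  calc ∑ i, ∑ j, ((starRingEnd ℂ) (A i j) * B i j).re
      ≤ ∑ i, ∑ j, ‖A i j‖ * ‖B i j‖ := by
        apply Finset.sum_le_sum; intro i _; apply Finset.sum_le_sum; intro j _; exact h1 i j
    _ = ∑ p : m × n, ‖A p.1 p.2‖ * ‖B p.1 p.2‖ := by rw [Fintype.sum_prod_type]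
    _ ≤ Real.sqrt (∑ p : m × n, ‖A p.1 p.2‖ ^ 2) * Real.sqrt (∑ p : m × n, ‖B p.1 p.2‖ ^ 2) :=
        Real.sum_mul_le_sqrt_mul_sqrt _ _ _
    _ = Real.sqrt (∑ i, ∑ j, ‖A i j‖ ^ 2) * Real.sqrt (∑ i, ∑ j, ‖B i j‖ ^ 2) := by
        rw [Fintype.sum_prod_type, Fintype.sum_prod_type]

lemma frobNorm_add_sq (A B : Matrix m n ℂ) :
    frobNorm (A + B) ^ 2 = frobNorm A ^ 2 + 2 * fip A B + frobNorm B ^ 2 := by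
  rw [← fip_self, ← fip_self, ← fip_self, fip_add_left, fip_add_right, fip_add_right,
    fip_symm B A]
  ring

lemma frobNorm_sub_sq (A B : Matrix m n ℂ) :
    frobNorm (A - B) ^ 2 = frobNorm A ^ 2 - 2 * fip A B + frobNorm B ^ 2 := by
  rw [sub_eq_add_neg, frobNorm_add_sq, show frobNorm (-B) = frobNorm B by
    simp [frobNorm], fip_neg_right]
  ring

lemma frobNorm_smul (c : ℝ) (hc : 0 ≤ c) (A : Matrix m n ℂ) :
    frobNorm ((c : ℂ) • A) = c * frobNorm A := by
  rw [frobNorm, frobNorm]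
  rw [show ∑ i, ∑ j, ‖((c:ℂ) • A) i j‖ ^ 2 = c ^ 2 * ∑ i, ∑ j, ‖A i j‖ ^ 2 by
    simp only [Matrix.smul_apply, smul_eq_mul, norm_mul, Finset.mul_sum, Complex.norm_real,
      Real.norm_eq_abs, abs_of_nonneg hc, mul_pow]]
  rw [Real.sqrt_mul (by positivity), Real.sqrt_sq hc]

end fipLemmas

section structLemmas
variable {M N L : ℕ}

lemma mul_split (Φ : Matrix (Fin M) (Fin N) ℂ) (T : Finset (Fin N))
    (Z : Matrix (Fin N) (Fin L) ℂ) :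
    Φ * Z = colSub Φ T * rowSub T Z + colSub Φ Tᶜ * rowSub Tᶜ Z := by
  ext i j
  simp only [Matrix.add_apply, Matrix.mul_apply, colSub, rowSub]
  rw [Finset.sum_coe_sort T (fun k => Φ i k * Z k j),
    Finset.sum_coe_sort Tᶜ (fun k => Φ i k * Z k j),
    Finset.sum_add_sum_compl]

lemma mul_of_rowsupport (Φ : Matrix (Fin M) (Fin N) ℂ) (T : Finset (Fin N))
    (Z : Matrix (Fin N) (Fin L) ℂ) (h : rowSub Tᶜ Z = 0) :
    Φ * Z = colSub Φ T * rowSub T Z := by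
  rw [mul_split Φ T Z, h, Matrix.mul_zero, add_zero]

lemma rowSub_compl_feedback (Φ : Matrix (Fin M) (Fin N) ℂ) (T : Finset (Fin N))
    (Xt : Matrix (Fin N) (Fin L) ℂ) : rowSub Tᶜ (feedback Φ T Xt) = 0 := by
  ext i j
  have : (i : Fin N) ∉ T := Finset.mem_compl.mp i.2
  simp [rowSub, feedback, this]

lemma rowSub_feedback (Φ : Matrix (Fin M) (Fin N) ℂ) (T : Finset (Fin N))
    (Xt : Matrix (Fin N) (Fin L) ℂ) :
    rowSub T (feedback Φ T Xt) =
      rowSub T Xt + ((colSub Φ T)ᴴ * colSub Φ T)⁻¹ * (colSub Φ T)ᴴ *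
        (colSub Φ Tᶜ * rowSub Tᶜ Xt) := by
  ext i j
  simp [rowSub, feedback, i.2]

lemma key_identity (Φ : Matrix (Fin M) (Fin N) ℂ) (T : Finset (Fin N))
    (Xt : Matrix (Fin N) (Fin L) ℂ)
    (hinv : IsUnit ((colSub Φ T)ᴴ * colSub Φ T)) :
    (colSub Φ T)ᴴ * (Φ * feedback Φ T Xt) = (colSub Φ T)ᴴ * (Φ * Xt) := by
  have hdet : IsUnit ((colSub Φ T)ᴴ * colSub Φ T).det :=
    (Matrix.isUnit_iff_isUnit_det _).mp hinv
  rw [mul_of_rowsupport Φ T _ (rowSub_compl_feedback Φ T Xt), rowSub_feedback,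
    mul_split Φ T Xt]
  simp only [Matrix.mul_add, Matrix.mul_assoc]
  congr 1
  rw [← Matrix.mul_assoc ((colSub Φ T)ᴴ) (colSub Φ T),
    ← Matrix.mul_assoc ((colSub Φ T)ᴴ * colSub Φ T),
    Matrix.mul_nonsing_inv _ hdet, Matrix.one_mul]

lemma rowSupp_subset {T : Finset (Fin N)} {Z : Matrix (Fin N) (Fin L) ℂ}
    (h : ∀ i, i ∉ T → Z i = 0) : rowSupp Z ⊆ T := by
  classical
  intro i hi
  rw [rowSupp, Finset.mem_filter] at hi
  by_contra hc
  exact hi.2 (h i hc)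

lemma not_mem_rowSupp {Z : Matrix (Fin N) (Fin L) ℂ} {i : Fin N}
    (h : i ∉ rowSupp Z) : Z i = 0 := by
  classical
  rw [rowSupp, Finset.mem_filter] at h
  push_neg at h
  exact h (Finset.mem_univ i)

lemma rowSupp_rowRestrict (T : Finset (Fin N)) (Z : Matrix (Fin N) (Fin L) ℂ) :
    rowSupp (rowRestrict T Z) ⊆ T := by
  apply rowSupp_subset
  intro i hi
  funext j
  simp [rowRestrict, hi]

lemma rowSupp_add (Z1 Z2 : Matrix (Fin N) (Fin L) ℂ) :
    rowSupp (Z1 + Z2) ⊆ rowSupp Z1 ∪ rowSupp Z2 := by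
  apply rowSupp_subset
  intro i hi
  rw [Finset.mem_union] at hi
  push_neg at hi
  funext j
  have h1 := not_mem_rowSupp hi.1
  have h2 := not_mem_rowSupp hi.2
  have : Z1 i j = 0 := by rw [h1]; rfl
  have : Z2 i j = 0 := by rw [h2]; rfl
  simp_all [Matrix.add_apply]

lemma rowSupp_sub (Z1 Z2 : Matrix (Fin N) (Fin L) ℂ) :
    rowSupp (Z1 - Z2) ⊆ rowSupp Z1 ∪ rowSupp Z2 := by
  apply rowSupp_subset
  intro i hi
  rw [Finset.mem_union] at hi
  push_neg at hi
  funext j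
  have h1 := not_mem_rowSupp hi.1
  have h2 := not_mem_rowSupp hi.2
  have e1 : Z1 i j = 0 := by rw [h1]; rfl
  have e2 : Z2 i j = 0 := by rw [h2]; rfl
  simp [Matrix.sub_apply, e1, e2]

lemma rowSupp_smul (c : ℂ) (Z : Matrix (Fin N) (Fin L) ℂ) :
    rowSupp (c • Z) ⊆ rowSupp Z := by
  apply rowSupp_subset
  intro i hi
  funext j
  have := not_mem_rowSupp hi
  have : Z i j = 0 := by rw [this]; rfl
  simp [Matrix.smul_apply, this]

lemma rowSupp_err_subset (Φ : Matrix (Fin M) (Fin N) ℂ) (T : Finset (Fin N))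
    (X Xt : Matrix (Fin N) (Fin L) ℂ) :
    rowSupp (X - feedback Φ T Xt) ⊆ rowSupp X ∪ T := by
  apply rowSupp_subset
  intro i hi
  rw [Finset.mem_union] at hi
  push_neg at hi
  funext j
  have h1 := not_mem_rowSupp hi.1
  have e1 : X i j = 0 := by rw [h1]; rfl
  have e2 : feedback Φ T Xt i j = 0 := by simp [feedback, hi.2]
  simp [Matrix.sub_apply, e1, e2]

end structLemmas


section polar
variable {M N L : ℕ}

lemma fip_zero_left (B : Matrix (Fin M) (Fin L) ℂ) : fip 0 B = 0 := by
  simp [fip]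

lemma fip_zero_right (B : Matrix (Fin M) (Fin L) ℂ) : fip B 0 = 0 := by
  simp [fip]

lemma polar1 {k : ℕ} {δ : ℝ} (Φ : Matrix (Fin M) (Fin N) ℂ) (hδ : IsRIC L Φ k δ)
    (Z1 Z2 : Matrix (Fin N) (Fin L) ℂ)
    (hU : (rowSupp Z1 ∪ rowSupp Z2).card ≤ k) :
    fip Z1 Z2 ≤ fip (Φ * Z1) (Φ * Z2) + δ * (frobNorm Z1 ^ 2 + frobNorm Z2 ^ 2) / 2 := by
  have hadd : (rowSupp (Z1 + Z2)).card ≤ k :=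
    le_trans (Finset.card_le_card (le_trans (rowSupp_add Z1 Z2) (le_refl _))) hU
  have hsub : (rowSupp (Z1 - Z2)).card ≤ k :=
    le_trans (Finset.card_le_card (rowSupp_sub Z1 Z2)) hU
  have h1 := (hδ _ hadd).1
  have h2 := (hδ _ hsub).2
  rw [Matrix.mul_add] at h1
  rw [Matrix.mul_sub] at h2
  rw [frobNorm_add_sq, frobNorm_add_sq] at h1
  rw [frobNorm_sub_sq, frobNorm_sub_sq] at h2
  nlinarith [h1, h2]

lemma polar2 {k : ℕ} {δ : ℝ} (Φ : Matrix (Fin M) (Fin N) ℂ) (hδ : IsRIC L Φ k δ)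
    (Z1 Z2 : Matrix (Fin N) (Fin L) ℂ)
    (hU : (rowSupp Z1 ∪ rowSupp Z2).card ≤ k) :
    fip Z1 Z2 ≤ fip (Φ * Z1) (Φ * Z2) + δ * frobNorm Z1 * frobNorm Z2 := by
  rcases eq_or_ne (frobNorm Z1) 0 with h1 | h1
  · have hz : Z1 = 0 := frobNorm_eq_zero h1
    subst hz
    simp [fip_zero_left, Matrix.mul_zero, h1]
  rcases eq_or_ne (frobNorm Z2) 0 with h2 | h2
  · have hz : Z2 = 0 := frobNorm_eq_zero h2
    subst hz
    simp [fip_zero_right, Matrix.mul_zero, h2]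
  have ha : 0 < frobNorm Z1 := lt_of_le_of_ne (frobNorm_nonneg _) (Ne.symm h1)
  have hb : 0 < frobNorm Z2 := lt_of_le_of_ne (frobNorm_nonneg _) (Ne.symm h2)
  set c : ℝ := Real.sqrt (frobNorm Z2 / frobNorm Z1) with hc
  have hcpos : 0 < c := Real.sqrt_pos.mpr (by positivity)
  have hc2 : c ^ 2 = frobNorm Z2 / frobNorm Z1 := Real.sq_sqrt (by positivity)
  have hU' : (rowSupp ((c : ℂ) • Z1) ∪ rowSupp (((c⁻¹ : ℝ) : ℂ) • Z2)).card ≤ k := by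
    refine le_trans (Finset.card_le_card ?_) hU
    exact Finset.union_subset_union (rowSupp_smul _ _) (rowSupp_smul _ _)
  have hp := polar1 Φ hδ ((c : ℂ) • Z1) (((c⁻¹ : ℝ) : ℂ) • Z2) hU'
  rw [fip_smul_left, fip_smul_right, Matrix.mul_smul, Matrix.mul_smul,
    fip_smul_left, fip_smul_right,
    frobNorm_smul c (le_of_lt hcpos), frobNorm_smul _ (by positivity)] at hp
  have hcc : c * (c⁻¹ * fip Z1 Z2) = fip Z1 Z2 := by
    field_simp
  have hcc2 : c * (c⁻¹ * fip (Φ * Z1) (Φ * Z2)) = fip (Φ * Z1) (Φ * Z2) := by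
    field_simp
  rw [hcc, hcc2] at hp
  have heq : δ * ((c * frobNorm Z1) ^ 2 + (c⁻¹ * frobNorm Z2) ^ 2) / 2
      = δ * frobNorm Z1 * frobNorm Z2 := by
    have h1' : (c * frobNorm Z1) ^ 2 = frobNorm Z1 * frobNorm Z2 := by
      rw [mul_pow, hc2]; field_simp
    have h2' : (c⁻¹ * frobNorm Z2) ^ 2 = frobNorm Z1 * frobNorm Z2 := by
      rw [mul_pow, inv_pow, hc2]
      field_simp
    rw [h1', h2']; ring
  rw [heq] at hp
  exact hp

end polar

/-- on-support error bound for the feedback (step of Lemma 8). -/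
theorem stmt9 {M N L s t : ℕ} (Φ : Matrix (Fin M) (Fin N) ℂ)
    (X : Matrix (Fin N) (Fin L) ℂ) (E : Matrix (Fin M) (Fin L) ℂ)
    (hXs : (rowSupp X).card ≤ s)
    (Y : Matrix (Fin M) (Fin L) ℂ) (hY : Y = Φ * X + E)
    (Xt : Matrix (Fin N) (Fin L) ℂ) (hfeas : Φ * Xt = Y)
    (T : Finset (Fin N)) (hTcard : T.card = t)
    (hinv : IsUnit ((colSub Φ T)ᴴ * colSub Φ T))
    (δst δt : ℝ) (hδst0 : 0 ≤ δst) (hδt0 : 0 ≤ δt)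
    (hRICst : IsRIC L Φ (s + t) δst) (hRICt : IsRIC L Φ t δt) :
    frobNorm (rowRestrict T (X - feedback Φ T Xt)) ≤
      δst * frobNorm (X - feedback Φ T Xt) + Real.sqrt (1 + δt) * frobNorm E := by
  classical
  set W := feedback Φ T Xt with hW
  set V := X - W with hV
  set VT := rowRestrict T V with hVT
  -- the key orthogonality identity
  have hkey : (colSub Φ T)ᴴ * (Φ * V) = - ((colSub Φ T)ᴴ * E) := by
    have h1 : Φ * Xt = Φ * X + E := by rw [hfeas, hY]
    have h2 := key_identity Φ T Xt hinv
    have h3 : Φ * V = Φ * X - Φ * W := by rw [hV, Matrix.mul_sub]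
    rw [h3, Matrix.mul_sub, hW, h2, h1, Matrix.mul_add]
    abel
  -- fip of restricted with full equals norm squared
  have hfipT : fip VT V = frobNorm VT ^ 2 := by
    rw [← fip_self, fip_eq_sum, fip_eq_sum]
    congr 1; ext i; congr 1; ext j
    by_cases h : i ∈ T <;> simp [hVT, rowRestrict, h]
  have hPhiVT : Φ * VT = colSub Φ T * rowSub T VT := by
    apply mul_of_rowsupport
    ext i j
    have hi : (i : Fin N) ∉ T := Finset.mem_compl.mp i.2
    simp [rowSub, hVT, rowRestrict, hi]
  have hfipE : fip (Φ * VT) (Φ * V) = - fip (Φ * VT) E := by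
    rw [fip, fip, hPhiVT, Matrix.conjTranspose_mul, Matrix.mul_assoc, hkey]
    rw [Matrix.mul_neg, Matrix.trace_neg, ← Matrix.mul_assoc, ← Matrix.conjTranspose_mul]
    simp
  -- cardinality bounds
  have hcardT : (rowSupp VT).card ≤ t := by
    rw [← hTcard]
    exact Finset.card_le_card (rowSupp_rowRestrict T V)
  have hcardU : (rowSupp VT ∪ rowSupp V).card ≤ s + t := by
    have hsub : rowSupp VT ∪ rowSupp V ⊆ rowSupp X ∪ T := by
      apply Finset.union_subset
      · exact (rowSupp_rowRestrict T V).trans (Finset.subset_union_right)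
      · rw [hV, hW]
        exact rowSupp_err_subset Φ T X Xt
    calc (rowSupp VT ∪ rowSupp V).card ≤ (rowSupp X ∪ T).card := Finset.card_le_card hsub
      _ ≤ (rowSupp X).card + T.card := Finset.card_union_le _ _
      _ ≤ s + t := by rw [hTcard]; exact Nat.add_le_add_right hXs t
  -- RIP polarization
  have hpol := polar2 Φ hRICst VT V hcardU
  -- Cauchy–Schwarz
  have hneg : frobNorm (-E) = frobNorm E := by simp [frobNorm]
  have hCS : - fip (Φ * VT) E ≤ frobNorm (Φ * VT) * frobNorm E := by
    have h := fip_cauchy (Φ * VT) (-E)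
    rw [fip_neg_right, hneg] at h
    exact h
  -- upper RIC bound on Φ VT
  have hup : frobNorm (Φ * VT) ≤ Real.sqrt (1 + δt) * frobNorm VT := by
    have h := (hRICt VT hcardT).2
    have h1 : frobNorm (Φ * VT) = Real.sqrt (frobNorm (Φ * VT) ^ 2) :=
      (Real.sqrt_sq (frobNorm_nonneg _)).symm
    rw [h1]
    calc Real.sqrt (frobNorm (Φ * VT) ^ 2) ≤ Real.sqrt ((1 + δt) * frobNorm VT ^ 2) :=
          Real.sqrt_le_sqrt h
      _ = Real.sqrt (1 + δt) * frobNorm VT := by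
          rw [Real.sqrt_mul (by linarith), Real.sqrt_sq (frobNorm_nonneg _)]
  -- combine
  have key : frobNorm VT ^ 2 ≤
      δst * frobNorm VT * frobNorm V + Real.sqrt (1 + δt) * frobNorm VT * frobNorm E := by
    have hE0 := frobNorm_nonneg E
    have hVT0 := frobNorm_nonneg VT
    have step1 : frobNorm VT ^ 2 ≤ fip (Φ * VT) (Φ * V) + δst * frobNorm VT * frobNorm V := by
      rw [← hfipT]; exact hpol
    have step2 : fip (Φ * VT) (Φ * V) ≤ Real.sqrt (1 + δt) * frobNorm VT * frobNorm E := by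
      rw [hfipE]
      calc - fip (Φ * VT) E ≤ frobNorm (Φ * VT) * frobNorm E := hCS
        _ ≤ Real.sqrt (1 + δt) * frobNorm VT * frobNorm E :=
            mul_le_mul_of_nonneg_right hup hE0
    linarith
  rcases eq_or_lt_of_le (frobNorm_nonneg VT) with h0 | h0
  · rw [← h0]
    have := frobNorm_nonneg V
    have := frobNorm_nonneg E
    have := Real.sqrt_nonneg (1 + δt)
    positivity
  · nlinarith [key, h0]
end
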